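/- Let 0 < a < 1, let φ : (0,a] → (0,∞) be a continuous, strictly increasing index function with φ(λ) → 0 as λ → 0⁺, let Θ(λ) = √λ·φ(λ) and, for ε ∈ (0,1/2), Θ_ε(λ) = λ^{1/2−ε}·φ(λ). Fix δ ∈ (0, Θ(a)] and let α_* ∈ (0,a] satisfy Θ(α_*) = δ, and for each ε ∈ (0,1/2) let α_ε ∈ (0,a] satisfy Θ_ε(α_ε) = δ. Then α_ε → α_* as ε → 0⁺, and consequently α_ε^{−ε}·φ(α_ε) → φ(α_*) = φ(Θ^{−1}(δ)) as ε → 0⁺. -/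

import Mathlib

open Filter

/-- Let `0 < a < 1`, let `φ : (0,a] → (0,∞)` be a continuous, strictly increasing
index function with `φ(λ) → 0` as `λ → 0⁺`, let `Θ(λ) = √λ·φ(λ)` and, for
`ε ∈ (0,1/2)`, `Θ_ε(λ) = λ^{1/2−ε}·φ(λ)`. Fix `δ ∈ (0, Θ(a)]`, let `α_* ∈ (0,a]`
satisfy `Θ(α_*) = δ`, and for each `ε ∈ (0,1/2)` let `α_ε ∈ (0,a]` satisfy
`Θ_ε(α_ε) = δ`. Then `α_ε → α_*` as `ε → 0⁺`, and consequently
`α_ε^{−ε}·φ(α_ε) → φ(α_*) = φ(Θ⁻¹(δ))` as `ε → 0⁺`. -/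
theorem stmt15 (a : ℝ) (ha0 : 0 < a) (ha1 : a < 1)
    (phi : ℝ → ℝ)
    (hcont : ContinuousOn phi (Set.Ioc 0 a))
    (hmono : StrictMonoOn phi (Set.Ioc 0 a))
    (hpos : ∀ lam ∈ Set.Ioc (0 : ℝ) a, 0 < phi lam)
    (hlim : Tendsto phi (nhdsWithin 0 (Set.Ioi 0)) (nhds 0))
    (δ : ℝ) (hδ0 : 0 < δ) (hδa : δ ≤ Real.sqrt a * phi a)
    (αstar : ℝ) (hαstar : αstar ∈ Set.Ioc (0 : ℝ) a)
    (hΘstar : Real.sqrt αstar * phi αstar = δ)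
    (αe : ℝ → ℝ)
    (hαe : ∀ ε ∈ Set.Ioo (0 : ℝ) (1 / 2), αe ε ∈ Set.Ioc (0 : ℝ) a ∧
      (αe ε) ^ ((1 : ℝ) / 2 - ε) * phi (αe ε) = δ) :
    Tendsto αe (nhdsWithin 0 (Set.Ioi 0)) (nhds αstar) ∧
    Tendsto (fun ε => (αe ε) ^ (-ε) * phi (αe ε)) (nhdsWithin 0 (Set.Ioi 0))
      (nhds (phi αstar)) := by
  have hsmall : Set.Ioo (0 : ℝ) (1 / 2) ∈ nhdsWithin (0 : ℝ) (Set.Ioi 0) :=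
    Ioo_mem_nhdsGT_of_mem ⟨le_refl _, by norm_num⟩
  obtain ⟨hstar0, hstara⟩ := hαstar
  -- upper bound: αe ε ≤ αstar for all ε ∈ (0, 1/2)
  have hub : ∀ ε ∈ Set.Ioo (0 : ℝ) (1 / 2), αe ε ≤ αstar := by
    intro ε hε
    obtain ⟨⟨hx0, hxa⟩, heq⟩ := hαe ε hε
    have hx1 : αe ε ≤ 1 := le_of_lt (lt_of_le_of_lt hxa ha1)
    have h1 : Real.sqrt (αe ε) * phi (αe ε) ≤ δ := by
      have h2 : (αe ε) ^ ((1 : ℝ) / 2) ≤ (αe ε) ^ ((1 : ℝ) / 2 - ε) :=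
        Real.rpow_le_rpow_of_exponent_ge hx0 hx1 (by linarith [hε.1])
      have h3 : Real.sqrt (αe ε) = (αe ε) ^ ((1 : ℝ) / 2) :=
        Real.sqrt_eq_rpow _
      calc Real.sqrt (αe ε) * phi (αe ε)
          ≤ (αe ε) ^ ((1 : ℝ) / 2 - ε) * phi (αe ε) := by
            rw [h3]
            exact mul_le_mul_of_nonneg_right h2 (le_of_lt (hpos _ ⟨hx0, hxa⟩))
        _ = δ := heq
    by_contra hcon
    push_neg at hcon
    have hΘlt : Real.sqrt αstar * phi αstar < Real.sqrt (αe ε) * phi (αe ε) := by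
      have hs : Real.sqrt αstar < Real.sqrt (αe ε) := Real.sqrt_lt_sqrt (le_of_lt hstar0) hcon
      have hp : phi αstar < phi (αe ε) := hmono ⟨hstar0, hstara⟩ ⟨hx0, hxa⟩ hcon
      exact mul_lt_mul' (le_of_lt hs) hp (le_of_lt (hpos _ ⟨hstar0, hstara⟩))
        (Real.sqrt_pos.mpr hx0)
    rw [hΘstar] at hΘlt
    linarith
  -- lower bound: for c ∈ (0, αstar), eventually c < αe ε
  have hlb : ∀ c, 0 < c → c < αstar → ∀ᶠ ε in nhdsWithin (0 : ℝ) (Set.Ioi 0), c < αe ε := by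
    intro c hc0 hc
    have hca : c ≤ a := le_of_lt (lt_of_lt_of_le hc hstara)
    have hΘc : Real.sqrt c * phi c < δ := by
      rw [← hΘstar]
      have hs : Real.sqrt c < Real.sqrt αstar := Real.sqrt_lt_sqrt (le_of_lt hc0) hc
      have hp : phi c < phi αstar := hmono ⟨hc0, hca⟩ ⟨hstar0, hstara⟩ hc
      exact mul_lt_mul' (le_of_lt hs) hp (le_of_lt (hpos _ ⟨hc0, hca⟩))
        (Real.sqrt_pos.mpr hstar0)
    have htc : Tendsto (fun ε : ℝ => c ^ (-ε) * (Real.sqrt c * phi c))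
        (nhdsWithin (0 : ℝ) (Set.Ioi 0)) (nhds (Real.sqrt c * phi c)) := by
      have h1 : Tendsto (fun ε : ℝ => c ^ (-ε)) (nhds (0 : ℝ)) (nhds 1) := by
        have h0 : ContinuousAt (fun y : ℝ => c ^ y) 0 :=
          Real.continuousAt_const_rpow (ne_of_gt hc0)
        have hn : Tendsto (fun ε : ℝ => -ε) (nhds (0 : ℝ)) (nhds (0 : ℝ)) := by
          simpa using (continuous_neg (G := ℝ)).tendsto (0 : ℝ)
        simpa [Real.rpow_zero, Function.comp_def] using h0.tendsto.comp hn
      simpa using ((h1.mono_left nhdsWithin_le_nhds).mul_const (Real.sqrt c * phi c))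
    have hev : ∀ᶠ ε in nhdsWithin (0 : ℝ) (Set.Ioi 0),
        c ^ (-ε) * (Real.sqrt c * phi c) < δ :=
      htc.eventually_lt_const hΘc
    filter_upwards [hev, hsmall] with ε h1 hε
    obtain ⟨⟨hx0, hxa⟩, heq⟩ := hαe ε hε
    by_contra hcon
    push_neg at hcon
    have hrw : c ^ ((1 : ℝ) / 2 - ε) = c ^ (-ε) * Real.sqrt c := by
      rw [Real.sqrt_eq_rpow, ← Real.rpow_add hc0]
      ring_nf
    have h2 : δ ≤ c ^ ((1 : ℝ) / 2 - ε) * phi c := by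
      rw [← heq]
      have hb : (αe ε) ^ ((1 : ℝ) / 2 - ε) ≤ c ^ ((1 : ℝ) / 2 - ε) :=
        Real.rpow_le_rpow (le_of_lt hx0) hcon (by linarith [hε.2])
      have hp : phi (αe ε) ≤ phi c := hmono.monotoneOn ⟨hx0, hxa⟩ ⟨hc0, hca⟩ hcon
      exact mul_le_mul hb hp (le_of_lt (hpos _ ⟨hx0, hxa⟩))
        (Real.rpow_nonneg (le_of_lt hc0) _)
    rw [hrw, mul_assoc] at h2
    linarith
  have htend : Tendsto αe (nhdsWithin 0 (Set.Ioi 0)) (nhds αstar) := by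
    rw [tendsto_order]
    constructor
    · intro c hc
      rcases le_or_gt c 0 with h | h
      · filter_upwards [hsmall] with ε hε
        exact lt_of_le_of_lt h (hαe ε hε).1.1
      · exact hlb c h hc
    · intro c hc
      filter_upwards [hsmall] with ε hε
      exact lt_of_le_of_lt (hub ε hε) hc
  refine ⟨htend, ?_⟩
  have heq' : ∀ᶠ ε in nhdsWithin (0 : ℝ) (Set.Ioi 0),
      δ / Real.sqrt (αe ε) = (αe ε) ^ (-ε) * phi (αe ε) := by
    filter_upwards [hsmall] with ε hε
    obtain ⟨⟨hx0, hxa⟩, heq⟩ := hαe ε hε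
    have hrw : (αe ε) ^ (-ε : ℝ) =
        (αe ε) ^ (-(1 : ℝ) / 2) * (αe ε) ^ ((1 : ℝ) / 2 - ε) := by
      rw [← Real.rpow_add hx0]; ring_nf
    rw [hrw, mul_assoc, heq]
    rw [Real.sqrt_eq_rpow, div_eq_iff (by positivity), mul_comm,
      ← mul_assoc, ← Real.rpow_add hx0]
    norm_num
  have hs : Tendsto (fun ε => δ / Real.sqrt (αe ε)) (nhdsWithin (0 : ℝ) (Set.Ioi 0))
      (nhds (δ / Real.sqrt αstar)) := by
    exact tendsto_const_nhds.div ((Real.continuous_sqrt.continuousAt).tendsto.comp htend)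
      (ne_of_gt (Real.sqrt_pos.mpr hstar0))
  have hval : δ / Real.sqrt αstar = phi αstar := by
    rw [← hΘstar]
    field_simp
  rw [hval] at hs
  exact hs.congr' heq'
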